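/- Let q = 2^n (n ≥ 1), let g be an integer with g ≥ q−1, and let c, d ∈ F_q be nonzero elements with c² ≠ d. Set f(X) = X^{g+1} + X^{g+2−q} + c and h(X) = X^{2g+2} + X^{2g+4−2q} + d in F_q[X]. Then for any nonzero a, b ∈ F_q, the polynomials Q(X) = a·f(X) and R(X) = Q′(X)²·(b·h(X)) + ((b·h)′(X))² are coprime in F_q[X]; in particular f(X) and h(X) are coprime (note that in characteristic 2 one has h = f² + c² + d and h′ = 0). -/

import Mathlib

open Polynomial

/-- For `q = 2^n`, `g ≥ q−1`, and nonzero `c, d ∈ F_q` with `c² ≠ d`, set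
`f = X^{g+1} + X^{g+2−q} + c` and `h = X^{2g+2} + X^{2g+4−2q} + d`.  Then for all nonzero
`a, b ∈ F_q` the polynomials `Q = a·f` and `R = Q′²·(b·h) + ((b·h)′)²` are coprime; in
particular `f` and `h` are coprime. -/
theorem stmt_18 (n : ℕ) (hn : 1 ≤ n)
    (K : Type*) [Field K] [Fintype K]
    (q : ℕ) (hq : q = 2 ^ n) (hcard : Fintype.card K = q)
    (g : ℕ) (hg : q - 1 ≤ g)
    (c d : K) (hc : c ≠ 0) (hd : d ≠ 0) (hcd : c ^ 2 ≠ d) :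
    (∀ a b : K, a ≠ 0 → b ≠ 0 →
      IsCoprime (C a * ((X : Polynomial K) ^ (g + 1) + X ^ (g + 2 - q) + C c))
        ((Polynomial.derivative
            (C a * ((X : Polynomial K) ^ (g + 1) + X ^ (g + 2 - q) + C c))) ^ 2
            * (C b * ((X : Polynomial K) ^ (2 * g + 2) + X ^ (2 * g + 4 - 2 * q) + C d))
          + (Polynomial.derivative
              (C b * ((X : Polynomial K) ^ (2 * g + 2)
                + X ^ (2 * g + 4 - 2 * q) + C d))) ^ 2)) ∧
    IsCoprime ((X : Polynomial K) ^ (g + 1) + X ^ (g + 2 - q) + C c)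
      ((X : Polynomial K) ^ (2 * g + 2) + X ^ (2 * g + 4 - 2 * q) + C d) := by
  -- Characteristic 2
  haveI : CharP K (ringChar K) := ringChar.charP K
  have hp : (ringChar K).Prime := CharP.char_is_prime K _
  have hdvd : ringChar K ∣ q := by
    rw [← CharP.cast_eq_zero_iff K (ringChar K) q, ← hcard]
    exact FiniteField.cast_card_eq_zero K
  have hchar2 : ringChar K = 2 := by
    rw [hq] at hdvd
    have := hp.dvd_of_dvd_pow hdvd
    exact (Nat.prime_dvd_prime_iff_eq hp Nat.prime_two).mp this
  haveI hK2 : CharP K 2 := hchar2 ▸ ringChar.charP K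
  haveI hP2 : CharP (Polynomial K) 2 := Polynomial.instCharP 2
  -- numeric facts
  have hq2 : 2 ≤ q := by
    subst hq
    calc 2 = 2 ^ 1 := rfl
    _ ≤ 2 ^ n := Nat.pow_le_pow_right (by norm_num) hn
  have hqe : 2 ∣ q := by subst hq; exact dvd_pow_self 2 (by omega)
  set f : Polynomial K := X ^ (g + 1) + X ^ (g + 2 - q) + C c with hf
  set h : Polynomial K := X ^ (2 * g + 2) + X ^ (2 * g + 4 - 2 * q) + C d with hh
  -- parity casts
  have cast_even : ∀ m : ℕ, 2 ∣ m → (m : K) = 0 := by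
    intro m ⟨k, hk⟩
    subst hk
    push_cast
    rw [CharTwo.two_eq_zero, zero_mul]
  have cast_odd : ∀ m : ℕ, m % 2 = 1 → (m : K) = 1 := by
    intro m hm
    conv_lhs => rw [← Nat.mod_add_div m 2, hm]
    push_cast
    rw [CharTwo.two_eq_zero, zero_mul, add_zero]
  -- h = f^2 + C (c^2 + d)
  have hsq : h = f ^ 2 + C (c ^ 2 + d) := by
    have e1 : (g + 1) * 2 = 2 * g + 2 := by omega
    have e2 : (g + 2 - q) * 2 = 2 * g + 4 - 2 * q := by omega
    have hfsq : f ^ 2 = X ^ (2 * g + 2) + X ^ (2 * g + 4 - 2 * q) + C (c ^ 2) := by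
      rw [hf, CharTwo.add_sq, CharTwo.add_sq, ← pow_mul, ← pow_mul, ← C_pow, e1, e2]
    rw [hh, hfsq, map_add,
      add_assoc (X ^ (2 * g + 2) + X ^ (2 * g + 4 - 2 * q)) (C (c ^ 2)),
      ← add_assoc (C (c ^ 2)) (C (c ^ 2)), CharTwo.add_self_eq_zero, zero_add]
  have he : c ^ 2 + d ≠ 0 := by
    intro h0
    apply hcd
    rw [← CharTwo.neg_eq d]
    linear_combination h0
  -- f coprime with X
  have hfX : IsCoprime X f := by
    rw [Polynomial.irreducible_X.coprime_iff_not_dvd, Polynomial.X_dvd_iff, hf]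
    have h1 : ¬ (0 = g + 1) := by omega
    have h2 : ¬ (0 = g + 2 - q) := by omega
    simp [coeff_add, coeff_X_pow, coeff_C, h1, h2, hc]
  -- f coprime with h
  have hfh : IsCoprime f h := by
    have hu : IsCoprime f (C (c ^ 2 + d)) := by
      refine ⟨0, C (c ^ 2 + d)⁻¹, ?_⟩
      rw [zero_mul, zero_add, ← C_mul, inv_mul_cancel₀ he, C_1]
    have := hu.add_mul_left_right (f)
    rw [hsq]
    convert this using 1
    · rfl
    · rw [sq, add_comm]
  -- derivative of h is 0, derivative of f is a power of X
  have hdh : derivative h = 0 := by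
    rw [hh]
    simp only [derivative_add, derivative_X_pow, derivative_C]
    rw [cast_even _ (by omega), cast_even _ (by omega)]
    simp
  have hdf : ∃ m : ℕ, derivative f = X ^ m := by
    rw [hf]
    simp only [derivative_add, derivative_X_pow, derivative_C, add_zero]
    rcases Nat.even_or_odd g with hge | hgo
    · have hg2 : g % 2 = 0 := Nat.even_iff.mp hge
      refine ⟨g, ?_⟩
      rw [cast_odd (g+1) (by omega), cast_even (g+2-q) (by omega)]
      simp
    · have hg2 : g % 2 = 1 := Nat.odd_iff.mp hgo
      refine ⟨g + 1 - q, ?_⟩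
      rw [cast_even (g+1) (by omega), cast_odd (g+2-q) (by omega)]
      have hx : g + 2 - q - 1 = g + 1 - q := by omega
      simp [hx]
  refine ⟨?_, hfh⟩
  intro a b ha hb
  obtain ⟨m, hm⟩ := hdf
  have key : IsCoprime f ((derivative (C a * f)) ^ 2 * (C b * h) + (derivative (C b * h)) ^ 2) := by
    rw [derivative_C_mul, derivative_C_mul, hdh, mul_zero, hm,
      zero_pow (two_ne_zero), add_zero, mul_pow, ← pow_mul]
    have h1 : IsCoprime f (X ^ (m * 2)) := hfX.symm.pow_right
    have h2 : IsCoprime f (C a ^ 2) := by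
      refine ⟨0, C ((a ^ 2)⁻¹), ?_⟩
      rw [zero_mul, zero_add, ← C_pow, ← C_mul, inv_mul_cancel₀ (pow_ne_zero 2 ha), C_1]
    have h3 : IsCoprime f (C b) := by
      refine ⟨0, C b⁻¹, ?_⟩
      rw [zero_mul, zero_add, ← C_mul, inv_mul_cancel₀ hb, C_1]
    exact (h2.mul_right h1).mul_right (h3.mul_right hfh)
  have hCa : IsCoprime (C a) ((derivative (C a * f)) ^ 2 * (C b * h) + (derivative (C b * h)) ^ 2) := by
    refine ⟨C a⁻¹, 0, ?_⟩
    rw [zero_mul, add_zero, ← C_mul, inv_mul_cancel₀ ha, C_1]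
  exact hCa.mul_left key
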